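/- Suppose ∇φ, ∇f, ∇h are Lipschitz on a bounded set containing all iterates with constants L_φ, L_f, L_h, ‖∇²φ‖ ≤ M on this set, and β_k ≤ 1. Then with z^k = (x^k, x^{k−1}) and Φ(x,y) = F(x) + ((1+δ)L/2)·D_φ(y,x), there is κ > 0 (explicitly κ = √2·(L·L_φ + L_f + L_h + (1+δ)L(M + L_φ)/2)) such that dist(0, ∂^L Φ(z^{k+1})) ≤ κ‖z^{k+1} − z^k‖ for all k (relative error condition). -/

import Mathlib

open Filter Topology

/-- Bregman distance associated with `φ`. -/
noncomputable def Dphi {E : Type*} [NormedAddCommGroup E] [InnerProductSpace ℝ E]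
    [CompleteSpace E] (φ : E → ℝ) (x y : E) : ℝ :=
  φ x - φ y - (inner ℝ (gradient φ y) (x - y) : ℝ)

/-- Fréchet subdifferential. -/
def FrechetSubdiff {E : Type*} [NormedAddCommGroup E] [InnerProductSpace ℝ E]
    (J : E → ℝ) (x : E) : Set E :=
  {u | ∀ ε > (0 : ℝ), ∃ δ > (0 : ℝ), ∀ y : E, ‖y - x‖ < δ →
    J y - J x - (inner ℝ u (y - x) : ℝ) ≥ -ε * ‖y - x‖}

/-- Limiting (Mordukhovich) subdifferential. -/
def LimitingSubdiff {E : Type*} [NormedAddCommGroup E] [InnerProductSpace ℝ E]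
    (J : E → ℝ) (x : E) : Set E :=
  {u | ∃ (xs us : ℕ → E),
    Tendsto xs atTop (nhds x) ∧
    Tendsto (fun k => J (xs k)) atTop (nhds (J x)) ∧
    (∀ k, us k ∈ FrechetSubdiff J (xs k)) ∧
    Tendsto us atTop (nhds u)}

open InnerProductSpace

section Helpers

variable {E : Type*} [NormedAddCommGroup E] [InnerProductSpace ℝ E]

local notation "⟪" x ", " y "⟫" => @inner ℝ _ _ x y

lemma sqrt_sq_add_sq_le (x y : ℝ) (hx : 0 ≤ x) (hy : 0 ≤ y) :
    Real.sqrt (x ^ 2 + y ^ 2) ≤ x + y := by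
  rw [show x ^ 2 + y ^ 2 = (x + y) ^ 2 - 2 * (x * y) by ring]
  calc Real.sqrt ((x + y) ^ 2 - 2 * (x * y)) ≤ Real.sqrt ((x + y) ^ 2) := by
        apply Real.sqrt_le_sqrt; nlinarith [sq_nonneg (x*y), mul_nonneg hx hy]
    _ = x + y := Real.sqrt_sq (by linarith)

lemma add_le_sqrt2_mul (x y : ℝ) :
    x + y ≤ Real.sqrt 2 * Real.sqrt (x ^ 2 + y ^ 2) := by
  have h2 : Real.sqrt 2 * Real.sqrt (x ^ 2 + y ^ 2) = Real.sqrt (2 * (x ^ 2 + y ^ 2)) := by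
    rw [← Real.sqrt_mul (by norm_num)]
  rw [h2]
  have := Real.sqrt_le_sqrt (show (x + y) ^ 2 ≤ 2 * (x ^ 2 + y ^ 2) by nlinarith [sq_nonneg (x - y)])
  calc x + y ≤ |x + y| := le_abs_self _
    _ = Real.sqrt ((x + y) ^ 2) := (Real.sqrt_sq_eq_abs _).symm
    _ ≤ _ := this

lemma le_sqrt_sq_add_sq (x y : ℝ) : x ≤ Real.sqrt (x ^ 2 + y ^ 2) := by
  calc x ≤ |x| := le_abs_self _
    _ = Real.sqrt (x ^ 2) := (Real.sqrt_sq_eq_abs _).symm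
    _ ≤ _ := Real.sqrt_le_sqrt (by nlinarith [sq_nonneg y])

lemma key_subgrad [CompleteSpace E] (g φ : E → ℝ) (L : ℝ) (A a Ga : E)
    (hg : ConvexOn ℝ Set.univ g) (hφ : HasGradientAt φ Ga a)
    (hmin : ∀ t, L * φ a + g a - ⟪A, a⟫ ≤ L * φ t + g t - ⟪A, t⟫) (t : E) :
    g a + ⟪A - L • Ga, t - a⟫ ≤ g t := by
  set d := t - a with hd
  set Q : ℝ → ℝ := fun s => L * φ (a + s • d) with hQ
  have hq : HasDerivAt Q (L * ⟪Ga, d⟫) 0 := by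
    have h1 : HasDerivAt (fun s : ℝ => a + s • d) d 0 := by
      simpa using ((hasDerivAt_id (0 : ℝ)).smul_const d).const_add a
    have hφ' : HasFDerivAt φ ((InnerProductSpace.toDual ℝ E) Ga) (a + (0:ℝ) • d) := by
      simpa using hφ.hasFDerivAt
    have h2 := hφ'.comp_hasDerivAt 0 h1
    simpa [hQ] using h2.const_mul L
  set C := g t - g a - ⟪A, d⟫ with hC
  have claim : ∀ s ∈ Set.Ioc (0 : ℝ) 1, -C ≤ slope Q 0 s := by
    intro s hs
    have hs0 : 0 < s := hs.1
    have hs1 : s ≤ 1 := hs.2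
    have hcomb : a + s • d = (1 - s) • a + s • t := by
      rw [hd]; module
    have hgc : g (a + s • d) ≤ (1 - s) * g a + s * g t := by
      rw [hcomb]
      exact hg.2 (Set.mem_univ a) (Set.mem_univ t) (by linarith) (le_of_lt hs0) (by ring)
    have hmins := hmin (a + s • d)
    have hinner : ⟪A, a + s • d⟫ = ⟪A, a⟫ + s * ⟪A, d⟫ := by
      rw [inner_add_right, real_inner_smul_right]
    rw [slope_def_field, sub_zero, le_div_iff₀ hs0]
    simp only [hQ, zero_smul, add_zero]
    nlinarith [hmins, hgc, hinner]
  have htend : Tendsto (slope Q 0) (𝓝[>] 0) (𝓝 (L * ⟪Ga, d⟫)) := by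
    apply (hasDerivAt_iff_tendsto_slope.mp hq).mono_left
    exact nhdsWithin_mono 0 fun x hx => ne_of_gt hx
  have hkey : -C ≤ L * ⟪Ga, d⟫ := by
    refine ge_of_tendsto htend ?_
    exact Filter.eventually_of_mem (Ioc_mem_nhdsGT_of_mem ⟨le_refl 0, zero_lt_one⟩) claim
  have : ⟪A - L • Ga, d⟫ = ⟪A, d⟫ - L * ⟪Ga, d⟫ := by
    rw [inner_sub_left, real_inner_smul_left]
  rw [hd] at this ⊢
  linarith [hkey, this]

lemma frechet_mem_limiting (J : E → ℝ) (z u : E) (h : u ∈ FrechetSubdiff J z) :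
    u ∈ LimitingSubdiff J z :=
  ⟨fun _ => z, fun _ => u, tendsto_const_nhds, tendsto_const_nhds, fun _ => h,
    tendsto_const_nhds⟩

end Helpers

section Deriv

variable {E : Type*} [NormedAddCommGroup E] [InnerProductSpace ℝ E] [FiniteDimensional ℝ E]

local notation "⟪" x ", " y "⟫" => @inner ℝ _ _ x y

lemma contDiff_gradient (φ : E → ℝ) (hφ : ContDiff ℝ 2 φ) : ContDiff ℝ 1 (gradient φ) := by
  have h1 : ContDiff ℝ 1 (fderiv ℝ φ) := hφ.fderiv_right (by norm_num)
  show ContDiff ℝ 1 fun x => (toDual ℝ E).symm (fderiv ℝ φ x)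
  exact (toDual ℝ E).symm.contDiff.comp h1

lemma hasFDerivAt_psi (f h φ : E → ℝ) (c : ℝ) (hf : ContDiff ℝ 1 f) (hh : ContDiff ℝ 1 h)
    (hφ : ContDiff ℝ 2 φ) (a b : E) :
    ∃ D : WithLp 2 (E × E) →L[ℝ] ℝ,
      HasFDerivAt
        (fun z : WithLp 2 (E × E) =>
          f z.fst - h z.fst + c * (φ z.snd - φ z.fst - ⟪gradient φ z.fst, z.snd - z.fst⟫))
        D ((WithLp.equiv 2 (E × E)).symm (a, b)) ∧
      ∀ wv : WithLp 2 (E × E),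
        D wv = ⟪gradient f a - gradient h a
                  - c • (ContinuousLinearMap.adjoint (fderiv ℝ (gradient φ) a)) (b - a), wv.fst⟫
               + ⟪c • (gradient φ b - gradient φ a), wv.snd⟫ := by
  have hφ1 : ContDiff ℝ 1 φ := hφ.of_le (by norm_num)
  have hGc : ContDiff ℝ 1 (gradient φ) := contDiff_gradient φ hφ
  have hfa : HasFDerivAt f (toDual ℝ E (gradient f a)) a :=
    ((hf.differentiable one_ne_zero) a).hasGradientAt.hasFDerivAt
  have hha : HasFDerivAt h (toDual ℝ E (gradient h a)) a :=
    ((hh.differentiable one_ne_zero) a).hasGradientAt.hasFDerivAt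
  have hφa : HasFDerivAt φ (toDual ℝ E (gradient φ a)) a :=
    ((hφ1.differentiable one_ne_zero) a).hasGradientAt.hasFDerivAt
  have hφb : HasFDerivAt φ (toDual ℝ E (gradient φ b)) b :=
    ((hφ1.differentiable one_ne_zero) b).hasGradientAt.hasFDerivAt
  have hGa : HasFDerivAt (gradient φ) (fderiv ℝ (gradient φ) a) a :=
    (hGc.differentiable one_ne_zero a).hasFDerivAt
  have H1 : HasFDerivAt (fun p : E × E => f p.1)
      ((toDual ℝ E (gradient f a)).comp (ContinuousLinearMap.fst ℝ E E)) (a, b) :=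
    hfa.comp (a, b) hasFDerivAt_fst
  have H2 : HasFDerivAt (fun p : E × E => h p.1)
      ((toDual ℝ E (gradient h a)).comp (ContinuousLinearMap.fst ℝ E E)) (a, b) :=
    hha.comp (a, b) hasFDerivAt_fst
  have H3 : HasFDerivAt (fun p : E × E => φ p.2)
      ((toDual ℝ E (gradient φ b)).comp (ContinuousLinearMap.snd ℝ E E)) (a, b) :=
    hφb.comp (a, b) hasFDerivAt_snd
  have H4 : HasFDerivAt (fun p : E × E => φ p.1)
      ((toDual ℝ E (gradient φ a)).comp (ContinuousLinearMap.fst ℝ E E)) (a, b) :=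
    hφa.comp (a, b) hasFDerivAt_fst
  have H5f : HasFDerivAt (fun p : E × E => gradient φ p.1)
      ((fderiv ℝ (gradient φ) a).comp (ContinuousLinearMap.fst ℝ E E)) (a, b) :=
    by have := hGa.comp (a, b) (hasFDerivAt_fst : HasFDerivAt (@Prod.fst E E) (ContinuousLinearMap.fst ℝ E E) (a, b)); exact this
  have H5g : HasFDerivAt (fun p : E × E => p.2 - p.1)
      (ContinuousLinearMap.snd ℝ E E - ContinuousLinearMap.fst ℝ E E) (a, b) :=
    hasFDerivAt_snd.sub hasFDerivAt_fst
  have H5 := H5f.inner ℝ H5g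
  have Hψ₀ := (H1.sub H2).add (((H3.sub H4).sub H5).const_mul c)
  set e := WithLp.prodContinuousLinearEquiv 2 ℝ E E with he
  have heF : HasFDerivAt (⇑e) (e : WithLp 2 (E × E) →L[ℝ] E × E)
      ((WithLp.equiv 2 (E × E)).symm (a, b)) := e.hasFDerivAt
  have HD := Hψ₀.comp ((WithLp.equiv 2 (E × E)).symm (a, b)) heF
  refine ⟨_, HD, ?_⟩
  intro wv
  simp only [ContinuousLinearMap.coe_comp', Function.comp_apply, ContinuousLinearMap.add_apply,
    ContinuousLinearMap.coe_sub', Pi.sub_apply, ContinuousLinearMap.smul_apply,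
    ContinuousLinearMap.coe_fst', ContinuousLinearMap.coe_snd', fderivInnerCLM_apply,
    ContinuousLinearMap.prod_apply, toDual_apply_apply, smul_eq_mul,
    inner_sub_left, inner_sub_right, real_inner_smul_left,
    ContinuousLinearMap.adjoint_inner_left]
  have e1 : ((e : WithLp 2 (E × E) →L[ℝ] E × E) wv).1 = wv.fst := rfl
  have e2 : ((e : WithLp 2 (E × E) →L[ℝ] E × E) wv).2 = wv.snd := rfl
  rw [e1, e2, real_inner_comm ((fderiv ℝ (gradient φ) a) wv.fst) b,
    real_inner_comm ((fderiv ℝ (gradient φ) a) wv.fst) a]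
  ring

end Deriv

lemma norm_add₃_sub_le {E : Type*} [NormedAddCommGroup E] (a b c d : E) :
    ‖a + b + c - d‖ ≤ ‖a‖ + ‖b‖ + ‖c‖ + ‖d‖ := by
  have h1 := norm_sub_le (a + b + c) d
  have h2 := norm_add_le (a + b) c
  have h3 := norm_add_le a b
  linarith

set_option maxHeartbeats 2000000 in
theorem stmt16 {E : Type*} [NormedAddCommGroup E] [InnerProductSpace ℝ E]
    [FiniteDimensional ℝ E]
    (f g h φ : E → ℝ) (L l ρ δ : ℝ) (hL : 0 < L) (hl : 0 ≤ l) (hρ : 0 < ρ)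
    (hδ : δ ∈ Set.Ioo (0 : ℝ) 1)
    (hf : ContDiff ℝ 1 f) (hφ : ContDiff ℝ 2 φ) (hhd : ContDiff ℝ 1 h)
    (hφsc : ConvexOn ℝ Set.univ (fun x => φ x - ρ / 2 * ‖x‖ ^ 2))
    (hg : ConvexOn ℝ Set.univ g) (hglsc : LowerSemicontinuous g)
    (hh : ConvexOn ℝ Set.univ h)
    (S : Set E) (hS : Bornology.IsBounded S)
    (Lφ' Lf Lh M : ℝ)
    (hLipφ : ∀ a ∈ S, ∀ b ∈ S, ‖gradient φ a - gradient φ b‖ ≤ Lφ' * ‖a - b‖)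
    (hLipf : ∀ a ∈ S, ∀ b ∈ S, ‖gradient f a - gradient f b‖ ≤ Lf * ‖a - b‖)
    (hLiph : ∀ a ∈ S, ∀ b ∈ S, ‖gradient h a - gradient h b‖ ≤ Lh * ‖a - b‖)
    (hM : ∀ a ∈ S, ‖fderiv ℝ (gradient φ) a‖ ≤ M)
    (x y : ℕ → E) (β : ℕ → ℝ) (hβ : ∀ k, 0 ≤ β k ∧ β k ≤ 1)
    (hxS : ∀ k, x k ∈ S) (hyS : ∀ k, y k ∈ S)
    (hy : ∀ k, y k = x k + β k • (x k - x (k - 1)))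
    (hmin : ∀ k, ∀ z : E,
      L * φ (x (k + 1)) + g (x (k + 1))
          - (inner ℝ (L • gradient φ (y k) - gradient f (y k) + gradient h (x k))
              (x (k + 1)) : ℝ)
        ≤ L * φ z + g z
          - (inner ℝ (L • gradient φ (y k) - gradient f (y k) + gradient h (x k)) z : ℝ))
    (Φ : WithLp 2 (E × E) → ℝ)
    (hΦ : Φ = fun z =>
      (f (WithLp.equiv 2 (E × E) z).1 + g (WithLp.equiv 2 (E × E) z).1
        - h (WithLp.equiv 2 (E × E) z).1)
      + (1 + δ) * L / 2 * Dphi φ (WithLp.equiv 2 (E × E) z).2 (WithLp.equiv 2 (E × E) z).1)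
    (zseq : ℕ → WithLp 2 (E × E))
    (hz : ∀ k, zseq k = (WithLp.equiv 2 (E × E)).symm (x k, x (k - 1))) :
    ∀ k : ℕ,
      Metric.infDist (0 : WithLp 2 (E × E)) (LimitingSubdiff Φ (zseq (k + 1)))
        ≤ Real.sqrt 2 * (L * Lφ' + Lf + Lh + (1 + δ) * L * (M + Lφ') / 2)
            * ‖zseq (k + 1) - zseq k‖ := by
  intro k
  have hδ0 : 0 < δ := hδ.1
  set c : ℝ := (1 + δ) * L / 2 with hcdef
  have hc0 : 0 < c := by rw [hcdef]; nlinarith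
  have hzk1 : zseq (k + 1) = (WithLp.equiv 2 (E × E)).symm (x (k + 1), x k) := by
    rw [hz]; norm_num
  have hzk : zseq k = (WithLp.equiv 2 (E × E)).symm (x k, x (k - 1)) := hz k
  obtain ⟨D, hD, hDeq⟩ := hasFDerivAt_psi f h φ c hf hhd hφ (x (k + 1)) (x k)
  set A : E := L • gradient φ (y k) - gradient f (y k) + gradient h (x k) with hAdef
  set w : E := A - L • gradient φ (x (k + 1)) with hwdef
  have hGradφ : HasGradientAt φ (gradient φ (x (k + 1))) (x (k + 1)) :=
    ((hφ.differentiable (by norm_num)) _).hasGradientAt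
  have hw : ∀ t, g (x (k + 1)) + (inner ℝ w (t - x (k + 1)) : ℝ) ≤ g t := fun t =>
    key_subgrad g φ L A (x (k + 1)) (gradient φ (x (k + 1))) hg hGradφ (hmin k) t
  set T := fderiv ℝ (gradient φ) (x (k + 1)) with hTdef
  set v1 : E := gradient f (x (k + 1)) - gradient h (x (k + 1))
      - c • (ContinuousLinearMap.adjoint T) (x k - x (k + 1)) with hv1def
  set u2 : E := c • (gradient φ (x k) - gradient φ (x (k + 1))) with hu2def
  set u : WithLp 2 (E × E) := (WithLp.equiv 2 (E × E)).symm (v1 + w, u2) with hudef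
  have hΦeq : ∀ z : WithLp 2 (E × E), Φ z =
      (f z.fst - h z.fst + c * (φ z.snd - φ z.fst - (inner ℝ (gradient φ z.fst) (z.snd - z.fst) : ℝ)))
        + g z.fst := by
    intro z
    rw [hΦ]
    show f z.fst + g z.fst - h z.fst + c * Dphi φ z.snd z.fst = _
    simp only [Dphi]
    ring
  -- Fréchet subdifferential membership
  have hFre : u ∈ FrechetSubdiff Φ (zseq (k + 1)) := by
    rw [hzk1]
    set Z : WithLp 2 (E × E) := (WithLp.equiv 2 (E × E)).symm (x (k + 1), x k) with hZdef
    intro ε hε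
    have hlo := hD.isLittleO
    rw [Asymptotics.isLittleO_iff] at hlo
    obtain ⟨δ', hδ'pos, Hb⟩ := Metric.eventually_nhds_iff.mp (hlo hε)
    refine ⟨δ', hδ'pos, ?_⟩
    intro z' hz'
    have h1 := Hb (y := z') (by rw [dist_eq_norm]; exact hz')
    have h1' : |(f z'.fst - h z'.fst + c * (φ z'.snd - φ z'.fst
          - (inner ℝ (gradient φ z'.fst) (z'.snd - z'.fst) : ℝ)))
        - (f (x (k+1)) - h (x (k+1)) + c * (φ (x k) - φ (x (k+1))
          - (inner ℝ (gradient φ (x (k+1))) (x k - x (k+1)) : ℝ)))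
        - D (z' - Z)| ≤ ε * ‖z' - Z‖ := by
      simpa [show (Z.fst : E) = x (k + 1) from rfl, show (Z.snd : E) = x k from rfl] using h1
    have h2 := hw z'.fst
    have hcomp1 : (z' - Z).fst = z'.fst - x (k + 1) := rfl
    have hcomp2 : (z' - Z).snd = z'.snd - x k := rfl
    have hDz : D (z' - Z) = (inner ℝ v1 (z'.fst - x (k+1)) : ℝ)
        + (inner ℝ u2 (z'.snd - x k) : ℝ) := by
      rw [hDeq (z' - Z), hcomp1, hcomp2]
    have hiu : (inner ℝ u (z' - Z) : ℝ) = (inner ℝ v1 (z'.fst - x (k+1)) : ℝ)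
        + (inner ℝ w (z'.fst - x (k+1)) : ℝ) + (inner ℝ u2 (z'.snd - x k) : ℝ) := by
      rw [WithLp.prod_inner_apply]
      rw [show (u.ofLp.1 : E) = v1 + w from rfl, show (u.ofLp.2 : E) = u2 from rfl,
        show (z' - Z).ofLp.1 = z'.fst - x (k + 1) from rfl, show (z' - Z).ofLp.2 = z'.snd - x k from rfl, inner_add_left]
    have hZ1 : (Z.fst : E) = x (k + 1) := rfl
    have hZ2 : (Z.snd : E) = x k := rfl
    rw [hΦeq z', hΦeq Z, hZ1, hZ2, hiu]
    have habs := (abs_le.mp h1').1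
    simp only [ge_iff_le, neg_mul]
    linarith [habs, h2, hDz]
  have hmem := frechet_mem_limiting Φ _ u hFre
  have hdist : Metric.infDist (0 : WithLp 2 (E × E)) (LimitingSubdiff Φ (zseq (k + 1))) ≤ ‖u‖ := by
    have := Metric.infDist_le_dist_of_mem (x := (0 : WithLp 2 (E × E))) hmem
    rwa [dist_zero_left] at this
  -- norm estimates
  have hu1decomp : v1 + w = (gradient f (x (k + 1)) - gradient f (y k))
      + (gradient h (x k) - gradient h (x (k + 1)))
      + L • (gradient φ (y k) - gradient φ (x (k + 1)))
      - c • (ContinuousLinearMap.adjoint T) (x k - x (k + 1)) := by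
    rw [hv1def, hwdef, hAdef]; module
  have hTb : ‖(ContinuousLinearMap.adjoint T) (x k - x (k + 1))‖ ≤ M * ‖x k - x (k + 1)‖ := by
    calc ‖(ContinuousLinearMap.adjoint T) (x k - x (k + 1))‖
        ≤ ‖ContinuousLinearMap.adjoint T‖ * ‖x k - x (k + 1)‖ :=
          ContinuousLinearMap.le_opNorm _ _
      _ = ‖T‖ * ‖x k - x (k + 1)‖ := by rw [LinearIsometryEquiv.norm_map]
      _ ≤ M * ‖x k - x (k + 1)‖ :=
          mul_le_mul_of_nonneg_right (hM _ (hxS (k + 1))) (norm_nonneg _)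
  have hn1 : ‖v1 + w‖ ≤ Lf * ‖x (k + 1) - y k‖ + Lh * ‖x k - x (k + 1)‖
      + L * (Lφ' * ‖y k - x (k + 1)‖) + c * (M * ‖x k - x (k + 1)‖) := by
    rw [hu1decomp]
    have hb1 := hLipf (x (k + 1)) (hxS _) (y k) (hyS _)
    have hb2 := hLiph (x k) (hxS _) (x (k + 1)) (hxS _)
    have hb3 : ‖L • (gradient φ (y k) - gradient φ (x (k + 1)))‖
        ≤ L * (Lφ' * ‖y k - x (k + 1)‖) := by
      rw [norm_smul, Real.norm_eq_abs, abs_of_pos hL]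
      exact mul_le_mul_of_nonneg_left (hLipφ (y k) (hyS _) (x (k + 1)) (hxS _)) hL.le
    have hb4 : ‖c • (ContinuousLinearMap.adjoint T) (x k - x (k + 1))‖
        ≤ c * (M * ‖x k - x (k + 1)‖) := by
      rw [norm_smul, Real.norm_eq_abs, abs_of_pos hc0]
      exact mul_le_mul_of_nonneg_left hTb hc0.le
    refine le_trans (norm_add₃_sub_le _ _ _ _) ?_
    linarith [hb1, hb2, hb3, hb4]
  have hn2 : ‖u2‖ ≤ c * (Lφ' * ‖x k - x (k + 1)‖) := by
    rw [hu2def, norm_smul, Real.norm_eq_abs, abs_of_pos hc0]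
    exact mul_le_mul_of_nonneg_left (hLipφ (x k) (hxS _) (x (k + 1)) (hxS _)) hc0.le
  have hnu : ‖u‖ ≤ ‖v1 + w‖ + ‖u2‖ := by
    rw [hudef, WithLp.prod_norm_eq_of_L2]
    rw [show (((WithLp.equiv 2 (E × E)).symm (v1 + w, u2)).fst : E) = v1 + w from rfl,
      show (((WithLp.equiv 2 (E × E)).symm (v1 + w, u2)).snd : E) = u2 from rfl]
    exact sqrt_sq_add_sq_le _ _ (norm_nonneg _) (norm_nonneg _)
  have hZdiff : zseq (k + 1) - zseq k
      = (WithLp.equiv 2 (E × E)).symm (x (k + 1) - x k, x k - x (k - 1)) := by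
    rw [hzk1, hzk]; rfl
  have hsnorm : ‖zseq (k + 1) - zseq k‖
      = Real.sqrt (‖x (k + 1) - x k‖ ^ 2 + ‖x k - x (k - 1)‖ ^ 2) := by
    rw [hZdiff, WithLp.prod_norm_eq_of_L2]
    rfl
  have hple : ‖x (k + 1) - x k‖ ≤ ‖zseq (k + 1) - zseq k‖ := by
    rw [hsnorm]; exact le_sqrt_sq_add_sq _ _
  have hpqle : ‖x (k + 1) - x k‖ + ‖x k - x (k - 1)‖
      ≤ Real.sqrt 2 * ‖zseq (k + 1) - zseq k‖ := by
    rw [hsnorm]; exact add_le_sqrt2_mul _ _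
  have hyb : ‖x (k + 1) - y k‖ ≤ ‖x (k + 1) - x k‖ + ‖x k - x (k - 1)‖ := by
    rw [hy k]
    have hrw : x (k + 1) - (x k + β k • (x k - x (k - 1)))
        = (x (k + 1) - x k) - β k • (x k - x (k - 1)) := by abel
    rw [hrw]
    refine le_trans (norm_sub_le _ _) ?_
    have hsm : ‖β k • (x k - x (k - 1))‖ = |β k| * ‖x k - x (k - 1)‖ := by
      rw [norm_smul, Real.norm_eq_abs]
    rw [hsm, abs_of_nonneg (hβ k).1]
    nlinarith [(hβ k).2, norm_nonneg (x k - x (k - 1))]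
  have hyr : ‖y k - x (k + 1)‖ = ‖x (k + 1) - y k‖ := norm_sub_rev _ _
  by_cases hdeg : x (k + 1) = x k ∧ x k = x (k - 1)
  · -- degenerate case: consecutive iterates coincide
    have hz0 : zseq (k + 1) = zseq k := by
      rw [hzk1, hzk, hdeg.1, hdeg.2]
    have hsub0 : x k - x (k - 1) = 0 := by rw [hdeg.2]; exact sub_self _
    have hyk : y k = x (k + 1) := by
      rw [hy k, hsub0, smul_zero, add_zero]; exact hdeg.1.symm
    have e1 : ‖x (k + 1) - y k‖ = 0 := by rw [hyk, sub_self, norm_zero]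
    have e2 : ‖x k - x (k + 1)‖ = 0 := by rw [hdeg.1, sub_self, norm_zero]
    have e3 : ‖y k - x (k + 1)‖ = 0 := by rw [hyr]; exact e1
    have hrhs : ‖zseq (k + 1) - zseq k‖ = 0 := by rw [hz0, sub_self, norm_zero]
    rw [hrhs, mul_zero]
    rw [e1, e2, e3] at hn1
    rw [e2] at hn2
    linarith [hdist, hnu, hn1, hn2]
  · -- nondegenerate case: all Lipschitz constants are nonnegative
    have hex : ∃ P Q : E, P ∈ S ∧ Q ∈ S ∧ P ≠ Q := by
      rcases not_and_or.mp hdeg with h' | h'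
      · exact ⟨x (k + 1), x k, hxS _, hxS _, h'⟩
      · exact ⟨x k, x (k - 1), hxS _, hxS _, h'⟩
    obtain ⟨P, Q, hP, hQ, hPQ⟩ := hex
    have hPQ0 : 0 < ‖P - Q‖ := by
      rw [norm_pos_iff]
      exact sub_ne_zero_of_ne hPQ
    have hLf0 : 0 ≤ Lf := by
      have := hLipf P hP Q hQ
      nlinarith [norm_nonneg (gradient f P - gradient f Q)]
    have hLh0 : 0 ≤ Lh := by
      have := hLiph P hP Q hQ
      nlinarith [norm_nonneg (gradient h P - gradient h Q)]
    have hLφ0 : 0 ≤ Lφ' := by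
      have := hLipφ P hP Q hQ
      nlinarith [norm_nonneg (gradient φ P - gradient φ Q)]
    have hM0 : 0 ≤ M := le_trans (norm_nonneg _) (hM (x 0) (hxS 0))
    have hsq1 : (1 : ℝ) ≤ Real.sqrt 2 := by
      have h12 := Real.sqrt_le_sqrt (show (1 : ℝ) ≤ 2 by norm_num)
      simpa using h12
    have hs0 : 0 ≤ ‖zseq (k + 1) - zseq k‖ := norm_nonneg _
    have hss : ‖zseq (k + 1) - zseq k‖ ≤ Real.sqrt 2 * ‖zseq (k + 1) - zseq k‖ := by nlinarith
    have hyk2 : ‖x (k + 1) - y k‖ ≤ Real.sqrt 2 * ‖zseq (k + 1) - zseq k‖ :=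
      le_trans hyb hpqle
    have hyk3 : ‖y k - x (k + 1)‖ ≤ Real.sqrt 2 * ‖zseq (k + 1) - zseq k‖ := by
      rw [hyr]; exact hyk2
    have hxk2 : ‖x k - x (k + 1)‖ ≤ Real.sqrt 2 * ‖zseq (k + 1) - zseq k‖ := by
      rw [norm_sub_rev]; exact le_trans hple hss
    have b1 := mul_le_mul_of_nonneg_left hyk2 hLf0
    have b2 := mul_le_mul_of_nonneg_left hxk2 hLh0
    have b3 := mul_le_mul_of_nonneg_left (mul_le_mul_of_nonneg_left hyk3 hLφ0) hL.le
    have b4 := mul_le_mul_of_nonneg_left (mul_le_mul_of_nonneg_left hxk2 hM0) hc0.le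
    have b5 := mul_le_mul_of_nonneg_left (mul_le_mul_of_nonneg_left hxk2 hLφ0) hc0.le
    have hfinal : ‖u‖ ≤ (Lf + Lh + L * Lφ' + c * M + c * Lφ')
        * (Real.sqrt 2 * ‖zseq (k + 1) - zseq k‖) := by
      nlinarith [hnu, hn1, hn2, b1, b2, b3, b4, b5]
    have hring : (Lf + Lh + L * Lφ' + c * M + c * Lφ')
        * (Real.sqrt 2 * ‖zseq (k + 1) - zseq k‖)
        = Real.sqrt 2 * (L * Lφ' + Lf + Lh + (1 + δ) * L * (M + Lφ') / 2)
          * ‖zseq (k + 1) - zseq k‖ := by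
      rw [hcdef]; ring
    linarith [hdist, hfinal, hring.le, hring.ge]
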